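/- Let L⁺ and L⁻ be real symmetric positive semidefinite n×n matrices, and let i ≠ j be two indices. Suppose there exist u, v ∈ ℝⁿ with L⁺ u = e_i - e_j and L⁻ v = e_i - e_j (where e_i, e_j are standard basis vectors). If (e_i - e_j)ᵀ v > (e_i - e_j)ᵀ u, i.e. v_i - v_j > u_i - u_j, then the symmetric matrix L⁺ - L⁻ has a strictly positive eigenvalue. -/

import Mathlib

open Matrix

/-- If L⁺ and L⁻ are positive semidefinite, L⁺u = L⁻v = e_i - e_j, and
the effective resistance v_i - v_j in L⁻ exceeds the effective resistance u_i - u_j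
in L⁺, then L⁺ - L⁻ has a strictly positive eigenvalue. -/
theorem resistance_comparison_instability (n : ℕ)
    (Lp Lm : Matrix (Fin n) (Fin n) ℝ)
    (hLp : Lp.PosSemidef) (hLm : Lm.PosSemidef)
    (i j : Fin n) (hij : i ≠ j)
    (u v : Fin n → ℝ)
    (hu : Lp.mulVec u = Pi.single i 1 - Pi.single j 1)
    (hv : Lm.mulVec v = Pi.single i 1 - Pi.single j 1)
    (hres : u i - u j < v i - v j) :
    ∃ μ : ℝ, 0 < μ ∧ ∃ x : Fin n → ℝ, x ≠ 0 ∧ (Lp - Lm).mulVec x = μ • x := by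
  set e : Fin n → ℝ := Pi.single i 1 - Pi.single j 1 with he
  set J : Matrix (Fin n) (Fin n) ℝ := Lp - Lm with hJdef
  have hJ : J.IsHermitian := hLp.1.sub hLm.1
  by_cases hpos : ∃ k, 0 < hJ.eigenvalues k
  · obtain ⟨k, hk⟩ := hpos
    refine ⟨hJ.eigenvalues k, hk, ⇑(hJ.eigenvectorBasis k), ?_, hJ.mulVec_eigenvectorBasis k⟩
    intro h0
    apply hJ.eigenvectorBasis.orthonormal.ne_zero k
    ext l
    exact congrFun h0 l
  · exfalso
    push_neg at hpos
    -- -J is positive semidefinite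
    have hnegJ : (-J).PosSemidef := by
      have := hJ.spectral_theorem
      have hrw : -J = (hJ.eigenvectorUnitary : Matrix (Fin n) (Fin n) ℝ) *
          diagonal (fun k => -hJ.eigenvalues k) *
          (hJ.eigenvectorUnitary : Matrix (Fin n) (Fin n) ℝ)ᴴ := by
        conv_lhs => rw [hJ.spectral_theorem]
        rw [Unitary.conjStarAlgAut_apply, ← Matrix.neg_mul, ← Matrix.mul_neg, ← Matrix.diagonal_neg]
        rfl
      rw [hrw]
      exact (Matrix.posSemidef_diagonal_iff.mpr fun k => neg_nonneg.mpr (hpos k)).mul_mul_conjTranspose_same _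
    -- key quadratic form inequalities
    have hue : u ⬝ᵥ e = u i - u j := by
      simp [he, dotProduct_sub, dotProduct_single]
    have hve : v ⬝ᵥ e = v i - v j := by
      simp [he, dotProduct_sub, dotProduct_single]
    -- symmetry helper
    have hsymm : ∀ (A : Matrix (Fin n) (Fin n) ℝ), A.IsHermitian →
        ∀ x y : Fin n → ℝ, x ⬝ᵥ (A *ᵥ y) = (A *ᵥ x) ⬝ᵥ y := by
      intro A hA x y
      rw [Matrix.dotProduct_mulVec, ← Matrix.mulVec_transpose]
      congr 1
      have : Aᵀ = A := by
        have := hA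
        rwa [Matrix.IsHermitian, Matrix.conjTranspose_eq_transpose_of_trivial] at this
      rw [this]
    -- (v-u)ᵀ Lp (v-u) ≥ 0 expands to vᵀLp v ≥ 2(v⬝e) - (u⬝e)
    have h1 : 0 ≤ (v - u) ⬝ᵥ (Lp *ᵥ (v - u)) := by
      have := hLp.dotProduct_mulVec_nonneg (v - u)
      simpa using this
    have hcross : u ⬝ᵥ (Lp *ᵥ v) = v ⬝ᵥ e := by
      rw [hsymm Lp hLp.1 u v, hu]
      exact dotProduct_comm _ _
    have hvLpu : v ⬝ᵥ (Lp *ᵥ u) = v ⬝ᵥ e := by rw [hu]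
    have huLpu : u ⬝ᵥ (Lp *ᵥ u) = u ⬝ᵥ e := by rw [hu]
    have hvLmv : v ⬝ᵥ (Lm *ᵥ v) = v ⬝ᵥ e := by rw [hv]
    have hvLpv : 2 * (v ⬝ᵥ e) - u ⬝ᵥ e ≤ v ⬝ᵥ (Lp *ᵥ v) := by
      have hexp : (v - u) ⬝ᵥ (Lp *ᵥ (v - u)) =
          v ⬝ᵥ (Lp *ᵥ v) - v ⬝ᵥ (Lp *ᵥ u) - u ⬝ᵥ (Lp *ᵥ v) + u ⬝ᵥ (Lp *ᵥ u) := by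
        rw [Matrix.mulVec_sub]
        simp [sub_dotProduct, dotProduct_sub]
        ring
      rw [hexp, hvLpu, hcross, huLpu] at h1
      linarith
    -- vᵀ J v > 0
    have hquad : 0 < v ⬝ᵥ (J *ᵥ v) := by
      have : v ⬝ᵥ (J *ᵥ v) = v ⬝ᵥ (Lp *ᵥ v) - v ⬝ᵥ (Lm *ᵥ v) := by
        rw [hJdef, Matrix.sub_mulVec, dotProduct_sub]
      rw [this, hvLmv, hue, hve] at *
      linarith
    -- but -J PSD gives vᵀ J v ≤ 0
    have := hnegJ.dotProduct_mulVec_nonneg v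
    simp only [Matrix.neg_mulVec, dotProduct_neg, star_trivial] at this
    linarith
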